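/- Let d ≥ 2 be an integer, and let r̂, ω, W, n be real numbers with r̂ > 1, 0 ≤ ω ≤ r̂^d, 0 < W ≤ √(r̂^(2d−2) − 1) · √(1 − ω/r̂^d), and 1 ≤ n ≤ d/(d−1). Then: (i) W^n ≤ ω + r̂^d · W · √(1 − ω/r̂^d) / √(r̂^(2d−2) − 1); and (ii) W ≤ √((d−1)/d^(d/(d−1))) · (ω + r̂^d · W · √(1 − ω/r̂^d) / √(r̂^(2d−2) − 1)). -/

import Mathlib

set_option maxHeartbeats 1000000

lemma young_aux (d : ℕ) (hd : 2 ≤ d) (y : ℝ) (hy : 0 ≤ y) :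
    y ≤ y ^ d + ((d : ℝ) - 1) / (d : ℝ) ^ ((d : ℝ) / ((d : ℝ) - 1)) := by
  set D : ℝ := (d : ℝ) with hD
  have hD2 : (2:ℝ) ≤ D := by rw [hD]; exact_mod_cast hd
  have hD1 : 1 < D := by linarith
  have hDpos : 0 < D := by linarith
  have hD1pos : 0 < D - 1 := by linarith
  set q : ℝ := D / (D - 1) with hq
  have hqpos : 0 < q := div_pos hDpos hD1pos
  have hpq : D.HolderConjugate q := by
    rw [hq]; exact Real.HolderConjugate.conjExponent hD1
  have ha : (0:ℝ) ≤ y * D ^ ((1:ℝ)/D) :=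
    mul_nonneg hy (Real.rpow_nonneg hDpos.le _)
  have hb : (0:ℝ) ≤ D ^ (-(1:ℝ)/D) := Real.rpow_nonneg hDpos.le _
  have hY := Real.young_inequality_of_nonneg ha hb hpq
  have hlhs : y * D ^ ((1:ℝ)/D) * D ^ (-(1:ℝ)/D) = y := by
    rw [mul_assoc, ← Real.rpow_add hDpos]
    have : (1:ℝ)/D + -1/D = 0 := by ring
    rw [this, Real.rpow_zero, mul_one]
  have ht1 : (y * D ^ ((1:ℝ)/D)) ^ D / D = y ^ d := by
    rw [Real.mul_rpow hy (Real.rpow_nonneg hDpos.le _), ← Real.rpow_mul hDpos.le,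
      one_div_mul_cancel hDpos.ne', Real.rpow_one]
    rw [hD, Real.rpow_natCast]
    field_simp
  have ht2 : (D ^ (-(1:ℝ)/D)) ^ q / q = (D - 1) / D ^ (D / (D - 1)) := by
    rw [← Real.rpow_mul hDpos.le]
    have he : (-(1:ℝ)/D) * q = -((1:ℝ)/(D-1)) := by
      rw [hq]; field_simp
    rw [he]
    have hx : D ^ (D/(D-1)) = D * D ^ ((1:ℝ)/(D-1)) := by
      have h2 : D/(D-1) = 1 + 1/(D-1) := by field_simp; ring
      rw [h2, Real.rpow_add hDpos, Real.rpow_one]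
    rw [Real.rpow_neg hDpos.le, hx, hq]
    have hne : D ^ ((1:ℝ)/(D-1)) ≠ 0 := (Real.rpow_pos_of_pos hDpos _).ne'
    field_simp
  rw [hlhs, ht1, ht2] at hY
  exact hY

/-- Thin-shell inequalities for strip HRT surfaces (the case `q = d−2`):
(i) `W^n ≤ ω + r̂^d W √(1 − ω/r̂^d)/√(r̂^(2d−2) − 1)` for `1 ≤ n ≤ d/(d−1)`, and
(ii) `W ≤ √((d−1)/d^(d/(d−1))) (ω + r̂^d W √(1 − ω/r̂^d)/√(r̂^(2d−2) − 1))`. -/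
theorem thin_shell_strip_bounds
    (d : ℕ) (hd : 2 ≤ d) (rh ω W n : ℝ)
    (hr : 1 < rh) (hω0 : 0 ≤ ω) (hωM : ω ≤ rh ^ d)
    (hW0 : 0 < W)
    (hW : W ≤ Real.sqrt (rh ^ (2 * d - 2) - 1) * Real.sqrt (1 - ω / rh ^ d))
    (hn1 : 1 ≤ n) (hn2 : n ≤ (d : ℝ) / ((d : ℝ) - 1)) :
    W ^ n ≤ ω + rh ^ d * W * Real.sqrt (1 - ω / rh ^ d) /
        Real.sqrt (rh ^ (2 * d - 2) - 1) ∧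
    W ≤ Real.sqrt (((d : ℝ) - 1) / (d : ℝ) ^ ((d : ℝ) / ((d : ℝ) - 1))) *
      (ω + rh ^ d * W * Real.sqrt (1 - ω / rh ^ d) /
        Real.sqrt (rh ^ (2 * d - 2) - 1)) := by
  have hr0 : (0:ℝ) < rh := by linarith
  set Rd : ℝ := rh ^ d with hRd
  set E : ℝ := rh ^ (2 * d - 2) with hE
  set A : ℝ := Real.sqrt (E - 1) with hA
  set s : ℝ := Real.sqrt (1 - ω / Rd) with hs
  set M : ℝ := ω + Rd * W * s / A with hM
  have hRd1 : 1 < Rd := one_lt_pow₀ hr (by omega)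
  have hRdpos : (0:ℝ) < Rd := by linarith
  have hE1 : 1 < E := one_lt_pow₀ hr (by omega)
  have hApos : 0 < A := Real.sqrt_pos.mpr (by linarith)
  have hA2 : A ^ 2 = E - 1 := Real.sq_sqrt (by linarith)
  have hfrac : 0 ≤ 1 - ω / Rd := by
    have : ω / Rd ≤ 1 := (div_le_one hRdpos).mpr hωM
    linarith
  have hs2 : s ^ 2 = 1 - ω / Rd := Real.sq_sqrt hfrac
  have hs0 : 0 ≤ s := Real.sqrt_nonneg _
  have hAs : 0 < A * s := lt_of_lt_of_le hW0 hW
  have hspos : 0 < s := by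
    rcases mul_pos_iff.mp hAs with ⟨_, h⟩ | ⟨h, _⟩
    · exact h
    · linarith
  have hs1 : s ≤ 1 := Real.sqrt_le_one.mpr (by linarith [div_nonneg hω0 hRdpos.le])
  have h1s2 : 0 ≤ 1 - s ^ 2 := by
    rw [hs2]
    have := div_nonneg hω0 hRdpos.le
    linarith
  have hAle : A ≤ rh ^ (d - 1) := by
    have h1 : (rh ^ (d - 1)) ^ 2 = E := by
      rw [hE, ← pow_mul]; congr 1; omega
    have h2 : A ≤ Real.sqrt E := Real.sqrt_le_sqrt (by linarith)
    rwa [← h1, Real.sqrt_sq (by positivity)] at h2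
  have hω : ω = Rd * (1 - s ^ 2) := by
    rw [hs2]; field_simp; ring
  -- key inequality : W * Rd ≤ M * (A * s)
  have expand : M * (A * s) = ω * (A * s) + Rd * W * s ^ 2 := by
    rw [hM]; field_simp
  have hωAs : ω * (A * s) = Rd * (A * s) - Rd * s ^ 2 * (A * s) := by
    rw [hω]; ring
  have hprod : 0 ≤ Rd * ((A * s - W) * (1 - s ^ 2)) :=
    mul_nonneg hRdpos.le (mul_nonneg (by linarith [hW]) h1s2)
  have hkey : W * Rd ≤ M * (A * s) := by
    have hdiff : M * (A * s) - W * Rd = Rd * ((A * s - W) * (1 - s ^ 2)) := by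
      rw [expand, hωAs]; ring
    linarith [hprod, hdiff]
  have hM0 : 0 ≤ M := by
    rw [hM]; positivity
  constructor
  · -- part (i)
    set t : ℝ := W / (A * s) with ht
    have ht0 : 0 < t := div_pos hW0 hAs
    have ht1 : t ≤ 1 := (div_le_one hAs).mpr hW
    have hWt : W = t * (A * s) := by rw [ht]; field_simp
    have htn : t ^ n ≤ t := by
      calc t ^ n ≤ t ^ (1:ℝ) := Real.rpow_le_rpow_of_exponent_ge ht0 ht1 hn1
        _ = t := Real.rpow_one t
    have hAsn : (A * s) ^ n ≤ Rd := by
      have hAs1 : A * s ≤ rh ^ (d - 1) := by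
        calc A * s ≤ A * 1 := mul_le_mul_of_nonneg_left hs1 hApos.le
          _ = A := mul_one A
          _ ≤ rh ^ (d - 1) := hAle
      have h1 : (A * s) ^ n ≤ (rh ^ (d - 1)) ^ n :=
        Real.rpow_le_rpow hAs.le hAs1 (by linarith)
      have h2 : (rh ^ (d - 1) : ℝ) ^ n = rh ^ (((d - 1 : ℕ) : ℝ) * n) := by
        rw [← Real.rpow_natCast rh (d - 1), ← Real.rpow_mul hr0.le]
      have h3 : ((d - 1 : ℕ) : ℝ) * n ≤ (d : ℝ) := by
        have hc : ((d - 1 : ℕ) : ℝ) = (d : ℝ) - 1 := by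
          have : (1:ℕ) ≤ d := by omega
          push_cast [Nat.cast_sub this]; ring
        have hd1 : (0:ℝ) < (d : ℝ) - 1 := by
          have : (2:ℝ) ≤ (d : ℝ) := by exact_mod_cast hd
          linarith
        have := (le_div_iff₀ hd1).mp hn2
        rw [hc]; linarith
      have h4 : rh ^ (((d - 1 : ℕ) : ℝ) * n) ≤ rh ^ ((d : ℝ)) :=
        Real.rpow_le_rpow_of_exponent_le hr.le h3
      have h5 : rh ^ ((d : ℝ)) = Rd := by
        rw [Real.rpow_natCast, hRd]
      calc (A * s) ^ n ≤ (rh ^ (d - 1)) ^ n := h1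
        _ = rh ^ (((d - 1 : ℕ) : ℝ) * n) := h2
        _ ≤ rh ^ ((d : ℝ)) := h4
        _ = Rd := h5
    have step1 : W ^ n ≤ t * Rd := by
      rw [hWt, Real.mul_rpow ht0.le hAs.le]
      have := mul_le_mul htn hAsn (Real.rpow_nonneg hAs.le n) (by linarith)
      exact this
    have step2 : t * Rd ≤ M := by
      have heq : t * Rd = W * Rd / (A * s) := by rw [ht]; ring
      rw [heq]
      exact (div_le_iff₀ hAs).mpr hkey
    exact le_trans step1 step2
  · -- part (ii)
    set c : ℝ := ((d : ℝ) - 1) / (d : ℝ) ^ ((d : ℝ) / ((d : ℝ) - 1)) with hc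
    have hDpos : (0:ℝ) < (d:ℝ) := by positivity
    have hcd : (2:ℝ) ≤ (d : ℝ) := by exact_mod_cast hd
    have hc0 : 0 ≤ c := by
      rw [hc]
      exact div_nonneg (by linarith) (Real.rpow_nonneg hDpos.le _)
    have hy := young_aux d hd ((rh ^ 2)⁻¹) (by positivity)
    have hpow : (0:ℝ) < rh ^ (2 * d) := by positivity
    have hmul := mul_le_mul_of_nonneg_right hy hpow.le
    have e1 : (rh ^ 2)⁻¹ * rh ^ (2 * d) = E := by
      rw [hE]
      have h2d : 2 * d = 2 + (2 * d - 2) := by omega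
      rw [h2d, pow_add]
      field_simp
      congr 1; omega
    have e2 : ((rh ^ 2)⁻¹) ^ d * rh ^ (2 * d) = 1 := by
      rw [← inv_pow, ← pow_mul]
      field_simp
      rw [← mul_pow, one_div_mul_cancel hr0.ne', one_pow]
    have e3 : Rd ^ 2 = rh ^ (2 * d) := by
      rw [hRd, ← pow_mul, mul_comm]
    have hEc : E - 1 ≤ c * Rd ^ 2 := by
      rw [add_mul, e2] at hmul
      rw [e1] at hmul
      rw [← e3] at hmul
      linarith
    have hAs2 : (A * s) ^ 2 ≤ c * Rd ^ 2 := by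
      have hh1 : (A * s) ^ 2 = A ^ 2 * s ^ 2 := by ring
      have hh2 : A ^ 2 * s ^ 2 ≤ A ^ 2 :=
        mul_le_of_le_one_right (sq_nonneg A) (by linarith)
      linarith [hA2, hEc, hh1.le, hh1.ge]
    have hAsk : A * s ≤ Real.sqrt c * Rd := by
      have h2 : Real.sqrt ((A * s) ^ 2) ≤ Real.sqrt (c * Rd ^ 2) := Real.sqrt_le_sqrt hAs2
      rwa [Real.sqrt_sq hAs.le, Real.sqrt_mul hc0, Real.sqrt_sq hRdpos.le] at h2
    have hfin : W * Rd ≤ Real.sqrt c * M * Rd := by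
      calc W * Rd ≤ M * (A * s) := hkey
        _ ≤ M * (Real.sqrt c * Rd) := mul_le_mul_of_nonneg_left hAsk hM0
        _ = Real.sqrt c * M * Rd := by ring
    exact le_of_mul_le_mul_right hfin hRdpos
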